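/- The support map from subdistribution composition to may-must relation composition is functorial: for substochastic kernels f : X → DMY and g : Y → DMZ on finite sets, supp(f;g) = supp(f);supp(g), where on the left ; is substochastic composition and on the right it is may-must relational composition, with the failure element handled accordingly: (supp f ; supp g)(x;z) = ∃y, supp f (x;y) ∧ supp g (y;z), and (supp f ; supp g)(x;⊥) = supp f (x;⊥) ∨ ∃y, supp f (x;y) ∧ supp g (y;⊥). -/

import Mathlib

open scoped NNReal

/-- A substochastic kernel: the failure mass at `x` is `1 - ∑ y, f x y`. -/
def IsSubstochastic {X Y : Type*} [Fintype Y] (f : X → Y → ℝ≥0) : Prop :=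
  ∀ x, ∑ y, f x y ≤ 1

/-- Composition of substochastic kernels. -/
def scomp {X Y Z : Type*} [Fintype Y] (f : X → Y → ℝ≥0) (g : Y → Z → ℝ≥0) :
    X → Z → ℝ≥0 := fun x z => ∑ y, f x y * g y z

/-- Support of a substochastic kernel: the may-must relation with
`supp f (x;y) ↔ f x y > 0` and `supp f (x;⊥) ↔ ∑ y, f x y < 1`.
The support map `subStoch → mmRel` is functorial: support of a composite is
the may-must relational composite of the supports. -/
theorem supp_subStoch_functorial {X Y Z : Type*} [Fintype X] [Fintype Y] [Fintype Z]
    (f : X → Y → ℝ≥0) (g : Y → Z → ℝ≥0)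
    (hf : IsSubstochastic f) (hg : IsSubstochastic g) :
    (∀ (x : X) (z : Z), 0 < scomp f g x z ↔ ∃ y, 0 < f x y ∧ 0 < g y z)
    ∧ (∀ x : X, (∑ z, scomp f g x z) < 1 ↔
        (∑ y, f x y) < 1 ∨ ∃ y, 0 < f x y ∧ (∑ z, g y z) < 1) := by
  constructor
  · intro x z
    simp only [scomp, pos_iff_ne_zero, ne_eq, Finset.sum_eq_zero_iff, Finset.mem_univ,
      mul_eq_zero, not_forall, not_or, forall_const]
  · intro x
    have key : (∑ z, scomp f g x z) = ∑ y, f x y * ∑ z, g y z := by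
      simp only [scomp]
      rw [Finset.sum_comm]
      simp [Finset.mul_sum]
    rw [key]
    constructor
    · intro h
      by_contra hc
      push_neg at hc
      obtain ⟨h1, h2⟩ := hc
      have h1' : (∑ y, f x y) = 1 := le_antisymm (hf x) h1
      have : (∑ y, f x y * ∑ z, g y z) = ∑ y, f x y := by
        apply Finset.sum_congr rfl
        intro y _
        rcases eq_or_lt_of_le (zero_le : (0:ℝ≥0) ≤ f x y) with h0 | h0
        · rw [← h0, zero_mul]
        · have := le_antisymm (hg y) (h2 y h0)
          rw [this, mul_one]
      rw [this, h1'] at h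
      exact lt_irrefl 1 h
    · intro h
      rcases h with h | ⟨y0, hy0, hy0'⟩
      · calc (∑ y, f x y * ∑ z, g y z) ≤ ∑ y, f x y * 1 :=
              Finset.sum_le_sum fun y _ => mul_le_mul_of_nonneg_left (hg y) zero_le
          _ = ∑ y, f x y := by simp
          _ < 1 := h
      · calc (∑ y, f x y * ∑ z, g y z) < ∑ y, f x y * 1 := by
              apply Finset.sum_lt_sum
              · exact fun y _ => mul_le_mul_of_nonneg_left (hg y) zero_le
              · exact ⟨y0, Finset.mem_univ y0, by
                  exact mul_lt_mul_of_pos_left hy0' hy0⟩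
          _ = ∑ y, f x y := by simp
          _ ≤ 1 := hf x
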